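/- For every x ≥ 0, the sequence a_n = ∏_{i=1}^{⌊√n·x⌋+2} (n - ⌊√n·x⌋ - i)/(n + 3 - i) converges to exp(-x²) as n → ∞. -/

import Mathlib

open Filter

lemma aux_sqrt_atTop : Tendsto (fun n : ℕ => Real.sqrt n) atTop atTop := by
  have h : Tendsto (fun y : ℝ => y ^ ((1:ℝ)/2)) atTop atTop :=
    tendsto_rpow_atTop (by norm_num)
  have := h.comp (tendsto_natCast_atTop_atTop (R := ℝ))
  refine this.congr fun n => ?_
  simp [Real.sqrt_eq_rpow, Function.comp]

lemma aux_log_slope :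
    Tendsto (fun t : ℝ => Real.log (1 - t) / t) (nhdsWithin 0 {0}ᶜ) (nhds (-1)) := by
  have h : HasDerivAt (fun t : ℝ => Real.log (1 - t)) (-1) 0 := by
    have h1 : HasDerivAt (fun t : ℝ => 1 - t) (-1) 0 := by
      simpa using (hasDerivAt_id (0:ℝ)).const_sub 1
    have h2 : HasDerivAt Real.log ((1:ℝ) - 0)⁻¹ ((1:ℝ) - 0) :=
      Real.hasDerivAt_log (by norm_num)
    have := h2.comp 0 h1
    norm_num at this
    exact this
  have h3 := hasDerivAt_iff_tendsto_slope.mp h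
  refine h3.congr fun t => ?_
  simp [slope_def_field]

lemma aux_pow_tendsto {u : ℕ → ℝ} {m : ℕ → ℕ} {c : ℝ}
    (hu0 : ∀ᶠ n in atTop, 0 < u n) (hu1 : ∀ᶠ n in atTop, u n < 1)
    (hu : Tendsto u atTop (nhds 0))
    (hmu : Tendsto (fun n => (m n : ℝ) * u n) atTop (nhds c)) :
    Tendsto (fun n => (1 - u n) ^ (m n)) atTop (nhds (Real.exp (-c))) := by
  have huw : Tendsto u atTop (nhdsWithin 0 {0}ᶜ) := by
    rw [tendsto_nhdsWithin_iff]
    exact ⟨hu, hu0.mono fun n hn => ne_of_gt hn⟩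
  have hlog : Tendsto (fun n => (m n : ℝ) * Real.log (1 - u n)) atTop (nhds (-c)) := by
    have h1 : Tendsto (fun n => ((m n : ℝ) * u n) * (Real.log (1 - u n) / u n)) atTop
        (nhds (c * -1)) := hmu.mul (aux_log_slope.comp huw)
    rw [show c * -1 = -c by ring] at h1
    refine h1.congr' ?_
    filter_upwards [hu0] with n hn
    have hne : u n ≠ 0 := ne_of_gt hn
    field_simp
  have hexp := (Real.continuous_exp.tendsto _).comp hlog
  refine hexp.congr' ?_
  filter_upwards [hu0, hu1] with n h0 h1
  have hpos : (0:ℝ) < 1 - u n := by linarith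
  rw [Function.comp_apply, ← Real.log_pow, Real.exp_log (pow_pos hpos _)]

lemma aux_main (x : ℝ) (k : ℕ → ℕ)
    (hksq : Tendsto (fun n => (k n : ℝ) / Real.sqrt n) atTop (nhds x)) :
    Tendsto (fun n : ℕ =>
      ∏ i ∈ Finset.Icc 1 (k n + 2),
        ((n : ℝ) - (k n : ℝ) - (i : ℝ)) / ((n : ℝ) + 3 - (i : ℝ)))
      atTop (nhds (Real.exp (-x ^ 2))) := by
  have hinv : Tendsto (fun n : ℕ => (Real.sqrt n)⁻¹) atTop (nhds 0) :=
    tendsto_inv_atTop_zero.comp aux_sqrt_atTop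
  have key : ∀ (a b : ℝ) (n : ℕ), (n : ℝ) ≠ 0 → a / n * ((n : ℝ) / b) = a / b := by
    intro a b n hne
    rw [div_mul_div_comm, mul_comm ((n:ℝ)) b, mul_div_mul_right _ _ hne]
  -- k n / n → 0
  have hkn : Tendsto (fun n => (k n : ℝ) / n) atTop (nhds 0) := by
    have := hksq.mul hinv
    rw [mul_zero] at this
    refine this.congr fun n => ?_
    rw [div_eq_mul_inv, div_eq_mul_inv, mul_assoc, ← mul_inv,
      Real.mul_self_sqrt (Nat.cast_nonneg n)]
  -- (k n + a) / √n → x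
  have hshift : ∀ a : ℝ, Tendsto (fun n => ((k n : ℝ) + a) / Real.sqrt n) atTop (nhds x) := by
    intro a
    have : Tendsto (fun n : ℕ => (k n : ℝ) / Real.sqrt n + a * (Real.sqrt n)⁻¹) atTop
        (nhds (x + a * 0)) := hksq.add (tendsto_const_nhds.mul hinv)
    rw [mul_zero, add_zero] at this
    refine this.congr fun n => ?_
    rw [add_div, div_eq_mul_inv a]
  -- base : (k+2)(k+3)/n → x^2
  have hbase : Tendsto (fun n => ((k n : ℝ) + 2) * ((k n : ℝ) + 3) / n) atTop (nhds (x ^ 2)) := by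
    have := (hshift 2).mul (hshift 3)
    rw [← sq] at this
    refine this.congr fun n => ?_
    rw [div_mul_div_comm, Real.mul_self_sqrt (Nat.cast_nonneg n)]
  -- (k n + 3)/n → 0
  have hk3n : Tendsto (fun n => ((k n : ℝ) + 3) / n) atTop (nhds 0) := by
    have h3 : Tendsto (fun n : ℕ => (3:ℝ) / n) atTop (nhds 0) :=
      Tendsto.div_atTop tendsto_const_nhds tendsto_natCast_atTop_atTop
    have := hkn.add h3
    rw [add_zero] at this
    refine this.congr fun n => ?_
    rw [← add_div]
  -- n/(n+2) → 1
  have hr2 : Tendsto (fun n : ℕ => (n : ℝ) / ((n : ℝ) + 2)) atTop (nhds 1) := by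
    have h2 : Tendsto (fun n : ℕ => ((n : ℝ) + 2) / n) atTop (nhds 1) := by
      have ha : Tendsto (fun n : ℕ => (2:ℝ) / n) atTop (nhds 0) :=
        Tendsto.div_atTop tendsto_const_nhds tendsto_natCast_atTop_atTop
      have h3 : Tendsto (fun n : ℕ => (1:ℝ) + 2 / n) atTop (nhds (1 + 0)) :=
        Tendsto.add tendsto_const_nhds ha
      rw [add_zero] at h3
      refine h3.congr' ?_
      filter_upwards [eventually_gt_atTop 0] with n hn
      have hne : (n:ℝ) ≠ 0 := Nat.cast_ne_zero.mpr hn.ne'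
      field_simp
    have := h2.inv₀ one_ne_zero
    rw [inv_one] at this
    refine this.congr fun n => ?_
    rw [inv_div]
  -- n/(n+1-k) → 1
  have hr1 : Tendsto (fun n : ℕ => (n : ℝ) / ((n : ℝ) + 1 - k n)) atTop (nhds 1) := by
    have h2 : Tendsto (fun n : ℕ => ((n : ℝ) + 1 - k n) / n) atTop (nhds 1) := by
      have ha : Tendsto (fun n : ℕ => (1:ℝ) / n) atTop (nhds 0) :=
        Tendsto.div_atTop tendsto_const_nhds tendsto_natCast_atTop_atTop
      have hb : Tendsto (fun n : ℕ => (1:ℝ) + 1 / n) atTop (nhds (1 + 0)) :=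
        Tendsto.add tendsto_const_nhds ha
      have h3 : Tendsto (fun n : ℕ => (1:ℝ) + 1 / n - (k n : ℝ) / n) atTop (nhds (1 + 0 - 0)) :=
        Tendsto.sub hb hkn
      rw [add_zero, sub_zero] at h3
      refine h3.congr' ?_
      filter_upwards [eventually_gt_atTop 0] with n hn
      have hne : (n:ℝ) ≠ 0 := Nat.cast_ne_zero.mpr hn.ne'
      field_simp
    have := h2.inv₀ one_ne_zero
    rw [inv_one] at this
    refine this.congr fun n => ?_
    rw [inv_div]
  -- eventual positivity of n + 1 - k n
  have hpos1 : ∀ᶠ n : ℕ in atTop, (0:ℝ) < (n : ℝ) + 1 - k n := by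
    filter_upwards [hkn.eventually_lt_const (show (0:ℝ) < 1 by norm_num),
      eventually_gt_atTop 0] with n h1 h2
    have hne : (0:ℝ) < (n:ℝ) := Nat.cast_pos.mpr h2
    rw [div_lt_one hne] at h1
    linarith
  -- u2 = (k+3)/(n+2) → 0
  have hu2 : Tendsto (fun n : ℕ => ((k n : ℝ) + 3) / ((n : ℝ) + 2)) atTop (nhds 0) := by
    refine tendsto_of_tendsto_of_tendsto_of_le_of_le' tendsto_const_nhds hk3n ?_ ?_
    · filter_upwards with n; positivity
    · filter_upwards [eventually_gt_atTop 0] with n hn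
      have hne : (0:ℝ) < (n:ℝ) := Nat.cast_pos.mpr hn
      gcongr
      linarith
  -- u1 = (k+3)/(n+1-k) → 0
  have hu1 : Tendsto (fun n : ℕ => ((k n : ℝ) + 3) / ((n : ℝ) + 1 - k n)) atTop (nhds 0) := by
    have := hk3n.mul hr1
    rw [zero_mul] at this
    refine this.congr' ?_
    filter_upwards [eventually_gt_atTop 0] with n hn
    exact key _ _ n (Nat.cast_ne_zero.mpr hn.ne')
  -- c2 = (k+2)(k+3)/(n+2) → x^2
  have hc2 : Tendsto (fun n : ℕ => ((k n : ℝ) + 2) * ((k n : ℝ) + 3) / ((n : ℝ) + 2)) atTop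
      (nhds (x ^ 2)) := by
    have := hbase.mul hr2
    rw [mul_one] at this
    refine this.congr' ?_
    filter_upwards [eventually_gt_atTop 0] with n hn
    exact key _ _ n (Nat.cast_ne_zero.mpr hn.ne')
  -- c1 = (k+2)(k+3)/(n+1-k) → x^2
  have hc1 : Tendsto (fun n : ℕ => ((k n : ℝ) + 2) * ((k n : ℝ) + 3) / ((n : ℝ) + 1 - k n)) atTop
      (nhds (x ^ 2)) := by
    have := hbase.mul hr1
    rw [mul_one] at this
    refine this.congr' ?_
    filter_upwards [eventually_gt_atTop 0] with n hn
    exact key _ _ n (Nat.cast_ne_zero.mpr hn.ne')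
  -- positivity of u's
  have hu1pos : ∀ᶠ n : ℕ in atTop, 0 < ((k n : ℝ) + 3) / ((n : ℝ) + 1 - k n) := by
    filter_upwards [hpos1] with n hn
    positivity
  have hu2pos : ∀ᶠ n : ℕ in atTop, 0 < ((k n : ℝ) + 3) / ((n : ℝ) + 2) := by
    filter_upwards with n; positivity
  have hu1lt : ∀ᶠ n : ℕ in atTop, ((k n : ℝ) + 3) / ((n : ℝ) + 1 - k n) < 1 :=
    hu1.eventually_lt_const (by norm_num)
  have hu2lt : ∀ᶠ n : ℕ in atTop, ((k n : ℝ) + 3) / ((n : ℝ) + 2) < 1 :=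
    hu2.eventually_lt_const (by norm_num)
  -- the two bounding sequences
  have hL : Tendsto (fun n : ℕ => (1 - ((k n : ℝ) + 3) / ((n : ℝ) + 1 - k n)) ^ (k n + 2)) atTop
      (nhds (Real.exp (-x ^ 2))) := by
    refine aux_pow_tendsto hu1pos hu1lt hu1 ?_
    refine hc1.congr fun n => ?_
    push_cast
    ring
  have hU : Tendsto (fun n : ℕ => (1 - ((k n : ℝ) + 3) / ((n : ℝ) + 2)) ^ (k n + 2)) atTop
      (nhds (Real.exp (-x ^ 2))) := by
    refine aux_pow_tendsto hu2pos hu2lt hu2 ?_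
    refine hc2.congr fun n => ?_
    push_cast
    ring
  -- squeeze
  refine tendsto_of_tendsto_of_tendsto_of_le_of_le' hL hU ?_ ?_
  · -- lower bound ≤ product
    filter_upwards [hpos1, hu1lt] with n hp hlt
    have hcard : (Finset.Icc 1 (k n + 2)).card = k n + 2 := by
      rw [Nat.card_Icc]
      omega
    calc (1 - ((k n : ℝ) + 3) / ((n : ℝ) + 1 - k n)) ^ (k n + 2)
        = ∏ _i ∈ Finset.Icc 1 (k n + 2), (1 - ((k n : ℝ) + 3) / ((n : ℝ) + 1 - k n)) := by
          rw [Finset.prod_const, hcard]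
      _ ≤ ∏ i ∈ Finset.Icc 1 (k n + 2),
            ((n : ℝ) - (k n : ℝ) - (i : ℝ)) / ((n : ℝ) + 3 - (i : ℝ)) := by
          refine Finset.prod_le_prod (fun i _ => by linarith) ?_
          intro i hi
          rw [Finset.mem_Icc] at hi
          have hi1 : (1:ℝ) ≤ i := by exact_mod_cast hi.1
          have hi2 : (i:ℝ) ≤ (k n : ℝ) + 2 := by exact_mod_cast hi.2
          have hden : (0:ℝ) < (n : ℝ) + 3 - i := by linarith
          have hfrac : ((k n : ℝ) + 3) / ((n : ℝ) + 3 - i) ≤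
              ((k n : ℝ) + 3) / ((n : ℝ) + 1 - k n) :=
            div_le_div_of_nonneg_left (by positivity) hp (by linarith)
          have hterm : ((n : ℝ) - (k n : ℝ) - (i : ℝ)) / ((n : ℝ) + 3 - (i : ℝ)) =
              1 - ((k n : ℝ) + 3) / ((n : ℝ) + 3 - i) := by
            field_simp
            ring
          rw [hterm]
          linarith
  · -- product ≤ upper bound
    filter_upwards [hpos1, hu1lt] with n hp hlt
    have hcard : (Finset.Icc 1 (k n + 2)).card = k n + 2 := by
      rw [Nat.card_Icc]
      omega
    calc (∏ i ∈ Finset.Icc 1 (k n + 2),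
            ((n : ℝ) - (k n : ℝ) - (i : ℝ)) / ((n : ℝ) + 3 - (i : ℝ)))
        ≤ ∏ _i ∈ Finset.Icc 1 (k n + 2), (1 - ((k n : ℝ) + 3) / ((n : ℝ) + 2)) := by
          refine Finset.prod_le_prod ?_ ?_
          · intro i hi
            rw [Finset.mem_Icc] at hi
            have hi1 : (1:ℝ) ≤ i := by exact_mod_cast hi.1
            have hi2 : (i:ℝ) ≤ (k n : ℝ) + 2 := by exact_mod_cast hi.2
            have hden : (0:ℝ) < (n : ℝ) + 3 - i := by linarith
            have hnum : (0:ℝ) ≤ (n : ℝ) - (k n : ℝ) - i := by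
              have hfrac : ((k n : ℝ) + 3) / ((n : ℝ) + 3 - i) ≤
                  ((k n : ℝ) + 3) / ((n : ℝ) + 1 - k n) :=
                div_le_div_of_nonneg_left (by positivity) hp (by linarith)
              have h1 : ((k n : ℝ) + 3) / ((n : ℝ) + 3 - i) < 1 := lt_of_le_of_lt hfrac hlt
              rw [div_lt_one hden] at h1
              linarith
            exact div_nonneg hnum hden.le
          · intro i hi
            rw [Finset.mem_Icc] at hi
            have hi1 : (1:ℝ) ≤ i := by exact_mod_cast hi.1
            have hi2 : (i:ℝ) ≤ (k n : ℝ) + 2 := by exact_mod_cast hi.2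
            have hden : (0:ℝ) < (n : ℝ) + 3 - i := by linarith
            have hterm : ((n : ℝ) - (k n : ℝ) - (i : ℝ)) / ((n : ℝ) + 3 - (i : ℝ)) =
                1 - ((k n : ℝ) + 3) / ((n : ℝ) + 3 - i) := by
              field_simp
              ring
            have hfrac : ((k n : ℝ) + 3) / ((n : ℝ) + 2) ≤
                ((k n : ℝ) + 3) / ((n : ℝ) + 3 - i) :=
              div_le_div_of_nonneg_left (by positivity) hden (by linarith)
            rw [hterm]
            linarith
      _ = (1 - ((k n : ℝ) + 3) / ((n : ℝ) + 2)) ^ (k n + 2) := by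
          rw [Finset.prod_const, hcard]

/-- For `x ≥ 0`, the product `∏_{i=1}^{⌊√n·x⌋+2} (n - ⌊√n·x⌋ - i)/(n + 3 - i)`
converges to `exp (-x²)` as `n → ∞`. -/
theorem prod_tendsto_exp (x : ℝ) (hx : 0 ≤ x) :
    Tendsto (fun n : ℕ =>
      ∏ i ∈ Finset.Icc 1 (⌊Real.sqrt n * x⌋₊ + 2),
        ((n : ℝ) - (⌊Real.sqrt n * x⌋₊ : ℝ) - (i : ℝ)) / ((n : ℝ) + 3 - (i : ℝ)))
      atTop (nhds (Real.exp (-x ^ 2))) := by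
  refine aux_main x (fun n => ⌊Real.sqrt n * x⌋₊) ?_
  have hsq_pos : ∀ᶠ n : ℕ in atTop, 0 < Real.sqrt n :=
    aux_sqrt_atTop.eventually_gt_atTop 0
  have hinv : Tendsto (fun n : ℕ => (Real.sqrt n)⁻¹) atTop (nhds 0) :=
    tendsto_inv_atTop_zero.comp aux_sqrt_atTop
  have hlow : Tendsto (fun n : ℕ => x - (Real.sqrt n)⁻¹) atTop (nhds x) := by
    have hc : Tendsto (fun _ : ℕ => x) atTop (nhds x) := tendsto_const_nhds
    have := hc.sub hinv
    rwa [sub_zero] at this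
  refine tendsto_of_tendsto_of_tendsto_of_le_of_le' hlow tendsto_const_nhds ?_ ?_
  · filter_upwards [hsq_pos] with n hn
    have h1 : Real.sqrt n * x < ⌊Real.sqrt n * x⌋₊ + 1 := Nat.lt_floor_add_one _
    rw [sub_le_iff_le_add,
      show (⌊Real.sqrt n * x⌋₊ : ℝ) / Real.sqrt n + (Real.sqrt n)⁻¹
          = ((⌊Real.sqrt n * x⌋₊ : ℝ) + 1) / Real.sqrt n by rw [add_div, one_div],
      le_div_iff₀ hn]
    nlinarith
  · filter_upwards [hsq_pos] with n hn
    have h1 : (⌊Real.sqrt n * x⌋₊ : ℝ) ≤ Real.sqrt n * x := Nat.floor_le (by positivity)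
    rw [div_le_iff₀ hn]
    nlinarith
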